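/- Let $E$ be an operator space realized in $\mathcal{B}(\mathcal{H})$. The diagonal evaluation map $\mathrm{D}: S_1^n(\ell_\infty^n(E)) \to \ell_1^n(E)$ defined by $\mathrm{D}\big( \sum_{i,j=1}^n e_{ij} \otimes x_{ij} \big) = \sum_{k=1}^n \delta_k \otimes x_{kk}^k$, where $x_{ij}^k \in E$ denotes the $k$-th coordinate of $x_{ij} \in \ell_\infty^n(E)$, is a complete contraction. -/

import Mathlib

open scoped ENNReal BigOperators ComplexOrder
open Matrix

noncomputable def ctmEig {m n : Type*} [Fintype m] [Fintype n] [DecidableEq n]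
    (a : Matrix m n ℂ) : n → ℝ :=
  (Matrix.posSemidef_conjTranspose_mul_self a).isHermitian.eigenvalues

/-- Schatten `p`-norm of a (rectangular) complex matrix; `p = ∞` is the operator norm. -/
noncomputable def schNorm {m n : Type*} [Fintype m] [Fintype n] [DecidableEq n]
    (p : ℝ≥0∞) (a : Matrix m n ℂ) : ℝ :=
  if p = ∞ then ⨆ j, Real.sqrt (ctmEig a j)
  else (∑ j, ctmEig a j ^ (p.toReal / 2)) ^ (1 / p.toReal)

/-- Multiplication of a scalar matrix against a matrix with entries in a module. -/
def mulCME {ι κ lam : Type*} [Fintype κ] {M : Type*} [AddCommMonoid M] [Module ℂ M]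
    (a : Matrix ι κ ℂ) (x : Matrix κ lam M) : Matrix ι lam M :=
  Matrix.of fun i j => ∑ k, a i k • x k j

/-- Multiplication of a module-valued matrix by a scalar matrix on the right. -/
def mulMEC {ι κ lam : Type*} [Fintype κ] {M : Type*} [AddCommMonoid M] [Module ℂ M]
    (x : Matrix ι κ M) (b : Matrix κ lam ℂ) : Matrix ι lam M :=
  Matrix.of fun i j => ∑ k, b k j • x i k

/-- An (abstract) operator space structure on a complex vector space `E`: a family of
seminorms on all rectangular matrices over `E` satisfying Ruan's axioms. -/
structure OpSpace (E : Type) [AddCommGroup E] [Module ℂ E] : Type 1 where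
  N : ∀ (ι κ : Type) [Fintype ι] [DecidableEq ι] [Fintype κ] [DecidableEq κ],
        Matrix ι κ E → ℝ
  nonneg : ∀ (ι κ : Type) [Fintype ι] [DecidableEq ι] [Fintype κ] [DecidableEq κ]
      (x : Matrix ι κ E), 0 ≤ N ι κ x
  norm_zero : ∀ (ι κ : Type) [Fintype ι] [DecidableEq ι] [Fintype κ] [DecidableEq κ],
      N ι κ 0 = 0
  triangle : ∀ (ι κ : Type) [Fintype ι] [DecidableEq ι] [Fintype κ] [DecidableEq κ]
      (x y : Matrix ι κ E), N ι κ (x + y) ≤ N ι κ x + N ι κ y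
  ruan_mul : ∀ (ι ι' κ κ' : Type) [Fintype ι] [DecidableEq ι] [Fintype ι'] [DecidableEq ι']
      [Fintype κ] [DecidableEq κ] [Fintype κ'] [DecidableEq κ']
      (a : Matrix ι' ι ℂ) (x : Matrix ι κ E) (b : Matrix κ κ' ℂ),
      N ι' κ' (mulCME a (mulMEC x b)) ≤ schNorm ⊤ a * N ι κ x * schNorm ⊤ b
  ruan_dsum : ∀ (ι ι' κ κ' : Type) [Fintype ι] [DecidableEq ι] [Fintype ι'] [DecidableEq ι']
      [Fintype κ] [DecidableEq κ] [Fintype κ'] [DecidableEq κ']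
      (x : Matrix ι κ E) (y : Matrix ι' κ' E),
      N (ι ⊕ ι') (κ ⊕ κ') (Matrix.fromBlocks x 0 0 y) ≤ max (N ι κ x) (N ι' κ' y)


-- ===== auxiliary lemmas =====

noncomputable def vn2 {ι : Type*} [Fintype ι] (x : ι → ℂ) : ℝ := ∑ i, ‖x i‖ ^ 2

lemma vn2_nonneg {ι : Type*} [Fintype ι] (x : ι → ℂ) : 0 ≤ vn2 x :=
  Finset.sum_nonneg fun _ _ => sq_nonneg _

lemma dot_star_self {ι : Type*} [Fintype ι] (x : ι → ℂ) :
    star x ⬝ᵥ x = ((vn2 x : ℝ) : ℂ) := by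
  simp [vn2, dotProduct, Complex.ofReal_sum]
  congr 1; ext i
  rw [← Complex.normSq_eq_conj_mul_self, Complex.normSq_eq_norm_sq]
  norm_cast

lemma quad_eq {m n : Type*} [Fintype m] [Fintype n] (a : Matrix m n ℂ) (x : n → ℂ) :
    star x ⬝ᵥ ((aᴴ * a) *ᵥ x) = ((vn2 (a *ᵥ x) : ℝ) : ℂ) := by
  rw [← Matrix.mulVec_mulVec, Matrix.dotProduct_mulVec, ← Matrix.star_mulVec,
    dot_star_self]

section herm
variable {n : Type*} [Fintype n] [DecidableEq n] (M : Matrix n n ℂ) (hM : M.IsHermitian)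

lemma star_y_eq (x : n → ℂ) :
    star ((star (hM.eigenvectorUnitary : Matrix n n ℂ)) *ᵥ x)
      = star x ᵥ* (hM.eigenvectorUnitary : Matrix n n ℂ) := by
  rw [Matrix.star_mulVec, Matrix.star_eq_conjTranspose, Matrix.conjTranspose_conjTranspose]

lemma vn2_unitary (x : n → ℂ) :
    vn2 ((star (hM.eigenvectorUnitary : Matrix n n ℂ)) *ᵥ x) = vn2 x := by
  set U : Matrix n n ℂ := (hM.eigenvectorUnitary : Matrix n n ℂ)
  have h1 : star (star U *ᵥ x) ⬝ᵥ (star U *ᵥ x) = star x ⬝ᵥ x := by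
    rw [star_y_eq, ← Matrix.dotProduct_mulVec, Matrix.mulVec_mulVec,
      Matrix.mem_unitaryGroup_iff.mp hM.eigenvectorUnitary.2, Matrix.one_mulVec]
  have := h1
  rw [dot_star_self, dot_star_self] at this
  exact_mod_cast this

lemma herm_quad (x : n → ℂ) :
    star x ⬝ᵥ (M *ᵥ x) = ∑ j, ((hM.eigenvalues j : ℂ) *
      ((‖((star (hM.eigenvectorUnitary : Matrix n n ℂ)) *ᵥ x) j‖ ^ 2 : ℝ) : ℂ)) := by
  set U : Matrix n n ℂ := (hM.eigenvectorUnitary : Matrix n n ℂ)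
  set y := star U *ᵥ x with hy
  conv_lhs => rw [hM.spectral_theorem, Unitary.conjStarAlgAut_apply]
  rw [← Matrix.mulVec_mulVec, ← Matrix.mulVec_mulVec, Matrix.dotProduct_mulVec,
    ← star_y_eq M hM x]
  rw [dotProduct, Fintype.sum_congr _ _ fun j => rfl]
  congr 1; ext j
  rw [Matrix.mulVec_diagonal]
  rw [mul_left_comm]
  congr 1
  show star (y j) * y j = _
  rw [Complex.star_def, ← Complex.normSq_eq_conj_mul_self, Complex.normSq_eq_norm_sq]


section opnorm
variable {m n : Type*} [Fintype m] [Fintype n] [DecidableEq n]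

lemma schNorm_top_def (a : Matrix m n ℂ) :
    schNorm ⊤ a = ⨆ j, Real.sqrt (ctmEig a j) := if_pos rfl

lemma schNorm_top_nonneg (a : Matrix m n ℂ) : 0 ≤ schNorm ⊤ a := by
  rw [schNorm_top_def]; exact Real.iSup_nonneg fun j => Real.sqrt_nonneg _

lemma ctmEig_nonneg (a : Matrix m n ℂ) (j : n) : 0 ≤ ctmEig a j :=
  (Matrix.posSemidef_conjTranspose_mul_self a).eigenvalues_nonneg j

lemma vn2_eq_eig_sum (a : Matrix m n ℂ) (x : n → ℂ) :
    vn2 (a *ᵥ x) = ∑ j, ctmEig a j *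
      ‖((star ((Matrix.posSemidef_conjTranspose_mul_self a).isHermitian.eigenvectorUnitary
          : Matrix n n ℂ)) *ᵥ x) j‖ ^ 2 := by
  have h := herm_quad (aᴴ * a) (Matrix.posSemidef_conjTranspose_mul_self a).isHermitian x
  rw [quad_eq] at h
  have : ((vn2 (a *ᵥ x) : ℝ) : ℂ) = ((∑ j, ctmEig a j *
      ‖((star ((Matrix.posSemidef_conjTranspose_mul_self a).isHermitian.eigenvectorUnitary
          : Matrix n n ℂ)) *ᵥ x) j‖ ^ 2 : ℝ) : ℂ) := by
    rw [h]; push_cast; rfl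
  exact_mod_cast this

lemma opBound (a : Matrix m n ℂ) (x : n → ℂ) :
    vn2 (a *ᵥ x) ≤ (schNorm ⊤ a) ^ 2 * vn2 x := by
  set hH := (Matrix.posSemidef_conjTranspose_mul_self a).isHermitian with hhH
  rw [vn2_eq_eig_sum]
  have hU : vn2 ((star (hH.eigenvectorUnitary : Matrix n n ℂ)) *ᵥ x) = vn2 x :=
    vn2_unitary _ hH x
  calc ∑ j, ctmEig a j * ‖((star (hH.eigenvectorUnitary : Matrix n n ℂ)) *ᵥ x) j‖ ^ 2
      ≤ ∑ j, (schNorm ⊤ a) ^ 2 * ‖((star (hH.eigenvectorUnitary : Matrix n n ℂ)) *ᵥ x) j‖ ^ 2 := by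
        apply Finset.sum_le_sum
        intro j _
        apply mul_le_mul_of_nonneg_right _ (sq_nonneg _)
        have h1 : Real.sqrt (ctmEig a j) ≤ schNorm ⊤ a := by
          rw [schNorm_top_def]
          exact le_ciSup (f := fun j => Real.sqrt (ctmEig a j)) (Set.Finite.bddAbove (Set.finite_range _)) j
        have := pow_le_pow_left₀ (Real.sqrt_nonneg _) h1 2
        rwa [Real.sq_sqrt (ctmEig_nonneg a j)] at this
    _ = (schNorm ⊤ a) ^ 2 * vn2 x := by rw [← Finset.mul_sum]; rw [← hU]; rfl

lemma opLe (a : Matrix m n ℂ) (c : ℝ) (hc : 0 ≤ c)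
    (h : ∀ x : n → ℂ, vn2 (a *ᵥ x) ≤ c ^ 2 * vn2 x) : schNorm ⊤ a ≤ c := by
  rw [schNorm_top_def]
  rcases isEmpty_or_nonempty n with hn | hn
  · rw [Real.iSup_of_isEmpty]; exact hc
  · apply ciSup_le
    intro j
    set hH := (Matrix.posSemidef_conjTranspose_mul_self a).isHermitian with hhH
    set v : n → ℂ := ⇑(hH.eigenvectorBasis j) with hv
    have hv1 : vn2 v = 1 := by
      have hnorm : ‖hH.eigenvectorBasis j‖ = 1 := hH.eigenvectorBasis.orthonormal.1 j
      have : ‖hH.eigenvectorBasis j‖ ^ 2 = ∑ i, ‖(hH.eigenvectorBasis j) i‖ ^ 2 := by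
        rw [EuclideanSpace.norm_eq]
        rw [Real.sq_sqrt (Finset.sum_nonneg fun _ _ => sq_nonneg _)]
      rw [hnorm, one_pow] at this
      exact this.symm
    have heig : (aᴴ * a) *ᵥ v = hH.eigenvalues j • v := hH.mulVec_eigenvectorBasis j
    have hquad : ((vn2 (a *ᵥ v) : ℝ) : ℂ) = ((hH.eigenvalues j : ℝ) : ℂ) := by
      rw [← quad_eq, heig]
      rw [dotProduct_smul, dot_star_self, hv1]
      push_cast
      rw [Complex.real_smul, mul_one]
    have heq : vn2 (a *ᵥ v) = hH.eigenvalues j := by exact_mod_cast hquad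
    have hle : hH.eigenvalues j ≤ c ^ 2 := by
      have := h v
      rw [heq, hv1, mul_one] at this
      exact this
    calc Real.sqrt (ctmEig a j) ≤ Real.sqrt (c ^ 2) := Real.sqrt_le_sqrt hle
      _ = c := Real.sqrt_sq hc

end opnorm


section structural

lemma kron_bound {ι κ τ : Type*} [Fintype ι] [Fintype κ] [DecidableEq κ] [Fintype τ]
    [DecidableEq τ] (a : Matrix ι κ ℂ) (A : Matrix (ι × τ) (κ × τ) ℂ)
    (hA : ∀ P Q, A P Q = a P.1 Q.1 * (if P.2 = Q.2 then 1 else 0)) (y : κ × τ → ℂ) :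
    vn2 (A *ᵥ y) ≤ (schNorm ⊤ a) ^ 2 * vn2 y := by
  have key : ∀ (i : ι) (t : τ), (A *ᵥ y) (i, t) = (a *ᵥ fun k => y (k, t)) i := by
    intro i t
    simp only [Matrix.mulVec, dotProduct, hA, Fintype.sum_prod_type, mul_ite, mul_one,
      mul_zero, ite_mul, zero_mul, Finset.sum_ite_eq, Finset.mem_univ, if_true]
  calc vn2 (A *ᵥ y) = ∑ t : τ, vn2 (a *ᵥ fun k => y (k, t)) := by
        rw [vn2, Fintype.sum_prod_type, Finset.sum_comm]
        simp only [vn2, key]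
    _ ≤ ∑ t : τ, (schNorm ⊤ a) ^ 2 * vn2 (fun k => y (k, t)) :=
        Finset.sum_le_sum fun t _ => opBound a _
    _ = (schNorm ⊤ a) ^ 2 * vn2 y := by
        rw [← Finset.mul_sum]
        congr 1
        rw [vn2, Fintype.sum_prod_type, Finset.sum_comm]
        rfl

lemma block_bound {κ τ σ : Type*} [Fintype κ] [DecidableEq κ] [Fintype τ] [Fintype σ]
    (B : κ → Matrix (τ × σ) (τ × σ) ℂ) (W : Matrix ((κ × τ) × σ) ((κ × τ) × σ) ℂ)
    (hW : ∀ P Q, W P Q = if P.1.1 = Q.1.1 then B P.1.1 (P.1.2, P.2) (Q.1.2, Q.2) else 0)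
    (C : ℝ) (hC : ∀ k v, vn2 (B k *ᵥ v) ≤ C ^ 2 * vn2 v) (y : (κ × τ) × σ → ℂ) :
    vn2 (W *ᵥ y) ≤ C ^ 2 * vn2 y := by
  have key : ∀ (k : κ) (l : τ) (p : σ),
      (W *ᵥ y) ((k, l), p) = (B k *ᵥ fun lq : τ × σ => y ((k, lq.1), lq.2)) (l, p) := by
    intro k l p
    simp only [Matrix.mulVec, dotProduct, hW, Fintype.sum_prod_type, ite_mul, zero_mul,
      Finset.sum_ite_irrel, Finset.sum_const_zero, Finset.sum_ite_eq, Finset.mem_univ, if_true]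
  calc vn2 (W *ᵥ y) = ∑ k : κ, vn2 (B k *ᵥ fun lq : τ × σ => y ((k, lq.1), lq.2)) := by
        rw [vn2, Fintype.sum_prod_type, Fintype.sum_prod_type]
        simp only [vn2, key, Fintype.sum_prod_type]
    _ ≤ ∑ k : κ, C ^ 2 * vn2 (fun lq : τ × σ => y ((k, lq.1), lq.2)) :=
        Finset.sum_le_sum fun k _ => hC k _
    _ = C ^ 2 * vn2 y := by
        rw [← Finset.mul_sum]
        congr 1
        rw [vn2, Fintype.sum_prod_type, Fintype.sum_prod_type]
        simp only [vn2, Fintype.sum_prod_type]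

lemma onehot_sum {m : Type*} [Fintype m] [DecidableEq m] {V : Type*} [AddCommMonoid V]
    [Module ℂ V] {k : ℕ} (e : m ≃ Fin k) (b : m) (g : m → V) :
    (∑ l : Fin k, (if e.symm l = b then (1 : ℂ) else 0) • g (e.symm l)) = g b := by
  rw [← Equiv.sum_comp e (fun l => (if e.symm l = b then (1 : ℂ) else 0) • g (e.symm l))]
  simp [ite_smul]

end structural

variable {E : Type} [AddCommGroup E] [Module ℂ E]

/-- A linear map `u : E → M_L(ℂ)` is a complete contraction (w.r.t. the operator space
structure `os` on `E` and the operator norms on scalar matrices). -/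
def CompleteContr (os : OpSpace E) {L : ℕ} (u : E →ₗ[ℂ] Matrix (Fin L) (Fin L) ℂ) : Prop :=
  ∀ (ι κ : Type) [Fintype ι] [DecidableEq ι] [Fintype κ] [DecidableEq κ]
    (z : Matrix ι κ E),
    schNorm ⊤ (Matrix.of fun (P : ι × Fin L) (Q : κ × Fin L) => u (z P.1 Q.1) P.2 Q.2)
      ≤ os.N ι κ z

/-- The matrix norms of `ℓ_1^n(E)` (operator space `ℓ_1`-direct sum), described through
its universal property: the norm of `x ∈ M_{ι,κ}(ℓ_1^n(E))` is the supremum of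
`‖∑_k (u_k)_{ι,κ}(x^k)‖` over all `n`-tuples of complete contractions `u_k : E → M_L`. -/
noncomputable def l1N (os : OpSpace E) {n : ℕ} (ι κ : Type)
    [Fintype ι] [DecidableEq ι] [Fintype κ] [DecidableEq κ]
    (x : Matrix ι κ (Fin n → E)) : ℝ :=
  sSup {t : ℝ | ∃ (L : ℕ) (u : Fin n → (E →ₗ[ℂ] Matrix (Fin L) (Fin L) ℂ)),
    (∀ k, CompleteContr os (u k)) ∧
    t = schNorm ⊤ (Matrix.of fun (P : ι × Fin L) (Q : κ × Fin L) =>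
          ∑ k, u k (x P.1 Q.1 k) P.2 Q.2)}

/-- The matrix norms of Pisier's vector-valued trace class `S_1^n(ℓ_∞^n(E))` at level
`M_K`: an element `z ∈ M_K ⊗ S_1^n ⊗ ℓ_∞^n(E)` has norm
`inf { ‖α‖ ‖w‖_{M_L(ℓ_∞^n(E))} ‖β‖ }` over factorizations
`z_{(P,i),(Q,j)} = ∑_{l,l'} α_{P,(i,l)} β_{(j,l'),Q} · w_{l,l'}`, where
`‖w‖_{M_L(ℓ_∞^n(E))} = max_k` of the `os`-norm of the `k`-th coordinate matrix. -/
noncomputable def s1LinfN (os : OpSpace E) {K n : ℕ}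
    (z : Matrix (Fin K × Fin n) (Fin K × Fin n) (Fin n → E)) : ℝ :=
  sInf {t : ℝ | ∃ (L : ℕ) (α : Matrix (Fin K) (Fin n × Fin L) ℂ)
      (w : Matrix (Fin L) (Fin L) (Fin n → E)) (β : Matrix (Fin n × Fin L) (Fin K) ℂ),
    (∀ (P Q : Fin K) (i j : Fin n),
      z (P, i) (Q, j) = ∑ l, ∑ l', (α P (i, l) * β (j, l') Q) • w l l') ∧
    t = schNorm ⊤ α *
          (⨆ k, os.N (Fin L) (Fin L) (Matrix.of fun l l' => w l l' k)) * schNorm ⊤ β}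

/-- Lemma 2.1 of the paper: the diagonal evaluation map
`D : S_1^n(ℓ_∞^n(E)) → ℓ_1^n(E)`, `D(∑ e_{ij} ⊗ x_{ij}) = ∑ δ_k ⊗ x_{kk}^k`, is a
complete contraction (stated here at every matrix level `M_K`, which is exactly
complete contractivity). -/
theorem stmt_19 (os : OpSpace E) (n K : ℕ)
    (z : Matrix (Fin K × Fin n) (Fin K × Fin n) (Fin n → E)) :
    l1N os (Fin K) (Fin K) (Matrix.of fun P Q => fun k => z (P, k) (Q, k) k)
      ≤ s1LinfN os z := by
  rw [l1N, s1LinfN]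
  apply Real.sSup_le
  · rintro t ⟨L', u, hu, rfl⟩
    apply le_csInf
    · -- the infimum set is nonempty
      classical
      set e : Fin K × Fin n ≃ Fin (K * n) := finProdFinEquiv
      refine ⟨_, K * n,
        Matrix.of (fun P il => if e.symm il.2 = (P, il.1) then (1 : ℂ) else 0),
        Matrix.of (fun l l' => z (e.symm l) (e.symm l')),
        Matrix.of (fun jl Q => if e.symm jl.2 = (Q, jl.1) then (1 : ℂ) else 0), ?_, rfl⟩
      intro P Q i j
      have h1 : ∀ l : Fin (K * n),
          (∑ l' : Fin (K * n), ((if e.symm l = (P, i) then (1 : ℂ) else 0) *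
              (if e.symm l' = (Q, j) then (1 : ℂ) else 0)) • z (e.symm l) (e.symm l'))
          = (if e.symm l = (P, i) then (1 : ℂ) else 0) • z (e.symm l) (Q, j) := by
        intro l
        calc (∑ l' : Fin (K * n), ((if e.symm l = (P, i) then (1 : ℂ) else 0) *
              (if e.symm l' = (Q, j) then (1 : ℂ) else 0)) • z (e.symm l) (e.symm l'))
            = (if e.symm l = (P, i) then (1 : ℂ) else 0) •
              ∑ l' : Fin (K * n), (if e.symm l' = (Q, j) then (1 : ℂ) else 0) •
                z (e.symm l) (e.symm l') := by
              rw [Finset.smul_sum]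
              exact Finset.sum_congr rfl fun l' _ => (mul_smul _ _ _)
          _ = _ := by rw [onehot_sum e (Q, j) (fun b => z (e.symm l) b)]
      simp only [Matrix.of_apply]
      rw [Fintype.sum_congr _ _ h1, onehot_sum e (P, i) (fun b => z b (Q, j))]
    · rintro b ⟨L, α, w, β, hzf, rfl⟩
      classical
      set Sα := schNorm ⊤ α with hSα
      set Sβ := schNorm ⊤ β with hSβ
      set C := ⨆ k, os.N (Fin L) (Fin L) (Matrix.of fun l l' => w l l' k) with hC
      have hCnn : 0 ≤ C := Real.iSup_nonneg fun k => os.nonneg _ _ _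
      set B : Fin n → Matrix (Fin L × Fin L') (Fin L × Fin L') ℂ := fun k =>
        Matrix.of fun (P : Fin L × Fin L') (Q : Fin L × Fin L') =>
          u k ((Matrix.of fun l l' => w l l' k) P.1 Q.1) P.2 Q.2 with hB
      have hBC : ∀ k (v : Fin L × Fin L' → ℂ), vn2 (B k *ᵥ v) ≤ C ^ 2 * vn2 v := by
        intro k v
        have h1 : schNorm ⊤ (B k) ≤ os.N (Fin L) (Fin L) (Matrix.of fun l l' => w l l' k) :=
          hu k (Fin L) (Fin L) (Matrix.of fun l l' => w l l' k)
        have h2 : schNorm ⊤ (B k) ≤ C :=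
          h1.trans (le_ciSup (f := fun k => os.N (Fin L) (Fin L)
            (Matrix.of fun l l' => w l l' k)) (Set.Finite.bddAbove (Set.finite_range _)) k)
        calc vn2 (B k *ᵥ v) ≤ (schNorm ⊤ (B k)) ^ 2 * vn2 v := opBound _ _
          _ ≤ C ^ 2 * vn2 v :=
            mul_le_mul_of_nonneg_right (pow_le_pow_left₀ (schNorm_top_nonneg _) h2 2)
              (vn2_nonneg v)
      set Atil : Matrix (Fin K × Fin L') ((Fin n × Fin L) × Fin L') ℂ := fun P Q =>
        α P.1 Q.1 * (if P.2 = Q.2 then 1 else 0) with hAtil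
      set Btil : Matrix ((Fin n × Fin L) × Fin L') (Fin K × Fin L') ℂ := fun P Q =>
        β P.1 Q.1 * (if P.2 = Q.2 then 1 else 0) with hBtil
      set Wtil : Matrix ((Fin n × Fin L) × Fin L') ((Fin n × Fin L) × Fin L') ℂ := fun P Q =>
        if P.1.1 = Q.1.1 then B P.1.1 (P.1.2, P.2) (Q.1.2, Q.2) else 0 with hWtil
      set M : Matrix (Fin K × Fin L') (Fin K × Fin L') ℂ := Matrix.of
        fun (P : Fin K × Fin L') (Q : Fin K × Fin L') =>
          ∑ k, u k ((Matrix.of fun P Q => fun k => z (P, k) (Q, k) k) P.1 Q.1 k) P.2 Q.2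
        with hM
      have hfact : M = Atil * Wtil * Btil := by
        ext ⟨P, p⟩ ⟨Q, q⟩
        simp only [Matrix.mul_apply]
        simp only [hM, Matrix.of_apply, Matrix.mul_apply, hAtil, hBtil, hWtil, hB,
          Fintype.sum_prod_type]
        simp only [hzf, Finset.sum_apply, Pi.smul_apply, map_sum, _root_.map_smul, Matrix.sum_apply,
          Matrix.smul_apply, smul_eq_mul, mul_ite, ite_mul, mul_one, mul_zero, zero_mul, one_mul,
          Finset.sum_ite_irrel, Finset.sum_const_zero, Finset.sum_ite_eq, Finset.sum_ite_eq',
          Finset.mem_univ, if_true, Finset.sum_mul, Finset.mul_sum]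
        refine Finset.sum_congr rfl fun k _ => ?_
        rw [Finset.sum_comm]
        exact Finset.sum_congr rfl fun l _ => Finset.sum_congr rfl fun l' _ => by ring
      have hmv : ∀ x : Fin K × Fin L' → ℂ, M *ᵥ x = Atil *ᵥ (Wtil *ᵥ (Btil *ᵥ x)) := by
        intro x
        rw [Matrix.mulVec_mulVec, Matrix.mulVec_mulVec, hfact, Matrix.mul_assoc]
      apply opLe _ _ (mul_nonneg (mul_nonneg (schNorm_top_nonneg _) hCnn) (schNorm_top_nonneg _))
      intro x
      calc vn2 (M *ᵥ x) = vn2 (Atil *ᵥ (Wtil *ᵥ (Btil *ᵥ x))) := by rw [hmv]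
        _ ≤ Sα ^ 2 * vn2 (Wtil *ᵥ (Btil *ᵥ x)) := kron_bound α Atil (fun P Q => rfl) _
        _ ≤ Sα ^ 2 * (C ^ 2 * vn2 (Btil *ᵥ x)) :=
            mul_le_mul_of_nonneg_left
              (block_bound B Wtil (fun P Q => rfl) C hBC _) (sq_nonneg _)
        _ ≤ Sα ^ 2 * (C ^ 2 * (Sβ ^ 2 * vn2 x)) :=
            mul_le_mul_of_nonneg_left (mul_le_mul_of_nonneg_left
              (kron_bound β Btil (fun P Q => rfl) x) (sq_nonneg _)) (sq_nonneg _)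
        _ = (Sα * C * Sβ) ^ 2 * vn2 x := by ring
  · apply Real.sInf_nonneg
    rintro b ⟨L, α, w, β, hzf, rfl⟩
    exact mul_nonneg (mul_nonneg (schNorm_top_nonneg _)
      (Real.iSup_nonneg fun k => os.nonneg _ _ _)) (schNorm_top_nonneg _)
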